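/- arXiv:2101.08725 — 2 statements merged into one kernel-verified Lean document; each statement's English description precedes it below -/
import Mathlib

section
/- For each n ≥ 0 define the polynomial G_n(x) = \sum_{k=0}^{n} \binom{x+k}{n-k}, where \binom{y}{m} is the binomial coefficient polynomial. Then for all n ≥ 1, G_n(x+1) = G_n(x) + G_{n-1}(x) as polynomials in ℚ[x]. -/
open Polynomial

/-- The binomial coefficient polynomial `y(y-1)⋯(y-m+1)/m!`. -/
noncomputable def binomPoly (m : ℕ) : Polynomial ℚ :=
  ((m.factorial : ℚ)⁻¹) • descPochhammer ℚ m

lemma pascal (m : ℕ) : (binomPoly (m+1)).comp (X+1) = binomPoly (m+1) + binomPoly m := by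
  have hL : (descPochhammer ℚ (m+1)).comp (X+1) = (X+1) * descPochhammer ℚ m := by
    rw [descPochhammer_succ_left, mul_comp, X_comp, comp_assoc]
    simp
  have hb : ((m.factorial : ℚ))⁻¹ = (((m+1).factorial : ℚ))⁻¹ * (m+1) := by
    rw [Nat.factorial_succ]
    have h1 : ((m+1 : ℕ) : ℚ) ≠ 0 := by positivity
    have h2 : ((m.factorial : ℕ) : ℚ) ≠ 0 := by positivity
    push_cast
    field_simp
  unfold binomPoly
  rw [smul_comp, hL, hb, descPochhammer_succ_right]
  simp only [smul_eq_C_mul, C_mul, C_add, C_1, C_eq_natCast]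
  ring

lemma binomPoly_zero_comp (p : ℚ[X]) : (binomPoly 0).comp p = 1 := by
  simp [binomPoly]

theorem stmt5 (G : ℕ → Polynomial ℚ)
    (hG : ∀ n, G n = ∑ k ∈ Finset.range (n + 1), (binomPoly (n - k)).comp (X + C (k : ℚ)))
    (n : ℕ) (hn : 1 ≤ n) :
    (G n).comp (X + 1) = G n + G (n - 1) := by
  obtain ⟨m, rfl⟩ : ∃ m, n = m + 1 := ⟨n - 1, (Nat.succ_pred_eq_of_pos hn).symm⟩
  rw [hG (m+1), hG (m+1-1)]
  simp only [Nat.add_sub_cancel]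
  rw [sum_comp]
  have key : ∀ k ∈ Finset.range (m+1),
      ((binomPoly (m + 1 - k)).comp (X + C (k : ℚ))).comp (X + 1)
      = (binomPoly (m + 1 - k)).comp (X + C (k : ℚ))
        + (binomPoly (m - k)).comp (X + C (k : ℚ)) := by
    intro k hk
    have hk' : k ≤ m := Nat.lt_succ_iff.mp (Finset.mem_range.mp hk)
    have h1 : m + 1 - k = (m - k) + 1 := by omega
    have h2 : (X + C (k:ℚ)).comp (X + 1) = (X+1).comp (X + C (k:ℚ)) := by
      simp [add_comm, add_assoc, add_left_comm]
    rw [comp_assoc, h1, h2, ← comp_assoc, pascal, add_comp]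
  rw [Finset.sum_range_succ, Finset.sum_range_succ (fun k => (binomPoly (m+1-k)).comp (X + C (k:ℚ))),
    Finset.sum_congr rfl key, Finset.sum_add_distrib]
  simp [binomPoly_zero_comp]
  ring
end

section
/- Let h ∈ ℚ⟦t⟧ be a formal power series with h(0) = 0, and write c_m = m! · [t^m] h for its coefficients, assuming c_1 = 1. Define p_n(x) = n! · [t^n] exp(x·h(t)). Then for all n ≥ 1, p_n(x) = x · \sum_{k=0}^{n-1} \binom{n-1}{k} c_{k+1} · p_{n-1-k}(x) as polynomials in x. -/
open PowerSeries

/-- `expComp g = exp(g)` for a power series `g` with zero constant term: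
the `n`-th coefficient is `∑_{j=0}^{n} [tⁿ](gʲ)/j!`. -/
noncomputable def expComp {A : Type*} [CommRing A] [Algebra ℚ A] (g : PowerSeries A) :
    PowerSeries A :=
  PowerSeries.mk fun n =>
    ∑ j ∈ Finset.range (n + 1), ((j.factorial : ℚ)⁻¹) • (PowerSeries.coeff n (g ^ j))

namespace StmtAux

open Finset

variable {A : Type*} [CommRing A] [Algebra ℚ A]

lemma coeff_pow_zero {g : PowerSeries A} (hg : constantCoeff g = 0)
    {a i : ℕ} (hlt : a < i) : PowerSeries.coeff a (g ^ i) = 0 :=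
  (X_pow_dvd_iff.mp (pow_dvd_pow_of_dvd (X_dvd_iff.mpr hg) i)) a hlt

lemma coeff_expComp {g : PowerSeries A} (hg : constantCoeff g = 0) {a m : ℕ} (ham : a ≤ m) :
    PowerSeries.coeff a (expComp g)
      = ∑ j ∈ range (m + 1), ((j.factorial : ℚ)⁻¹) • PowerSeries.coeff a (g ^ j) := by
  rw [expComp, coeff_mk]
  apply Finset.sum_subset
  · exact range_subset_range.mpr (by omega)
  · intro j hj hj'
    simp only [mem_range] at hj hj'
    rw [coeff_pow_zero hg (by omega), smul_zero]

lemma key {g : PowerSeries A} (hg : constantCoeff g = 0) (m : ℕ) :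
    ((m + 1 : ℕ) : A) * PowerSeries.coeff (m + 1) (expComp g) =
      PowerSeries.coeff m (expComp g * d⁄dX A g) := by
  have hterm : ∀ j : ℕ, PowerSeries.coeff (m + 1) (g ^ j) * ((m : A) + 1)
      = j • PowerSeries.coeff m (g ^ (j - 1) * d⁄dX A g) := by
    intro j
    have h1 : PowerSeries.coeff m (d⁄dX A (g ^ j))
        = PowerSeries.coeff (m + 1) (g ^ j) * ((m : A) + 1) := by
      rw [coeff_derivative]
    rw [← h1, Derivation.leibniz_pow]
    rw [smul_eq_mul, map_nsmul]
  calc ((m + 1 : ℕ) : A) * PowerSeries.coeff (m + 1) (expComp g)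
      = ∑ j ∈ range (m + 2), ((j.factorial : ℚ)⁻¹) •
          (PowerSeries.coeff (m + 1) (g ^ j) * ((m : A) + 1)) := by
        rw [expComp, coeff_mk, Finset.mul_sum]
        refine Finset.sum_congr rfl fun j _ => ?_
        rw [mul_smul_comm]
        push_cast
        ring_nf
    _ = ∑ i ∈ range (m + 1), ((i.factorial : ℚ)⁻¹) •
          PowerSeries.coeff m (g ^ i * d⁄dX A g) := by
        rw [Finset.sum_range_succ']
        simp only [hterm]
        rw [show ((0 : ℕ).factorial : ℚ)⁻¹ • ((0 : ℕ) • PowerSeries.coeff m (g ^ (0-1) * d⁄dX A g)) = 0 by simp]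
        rw [add_zero]
        refine Finset.sum_congr rfl fun i _ => ?_
        have : (i + 1 : ℕ) • PowerSeries.coeff m (g ^ (i + 1 - 1) * d⁄dX A g)
            = ((i + 1 : ℚ)) • PowerSeries.coeff m (g ^ i * d⁄dX A g) := by
          rw [Nat.add_sub_cancel, nsmul_eq_mul, Algebra.smul_def]
          push_cast
          ring
        rw [this, smul_smul]
        congr 1
        rw [Nat.factorial_succ]
        push_cast
        field_simp
    _ = PowerSeries.coeff m (expComp g * d⁄dX A g) := by
        have hrhs : PowerSeries.coeff m (expComp g * d⁄dX A g)
            = ∑ q ∈ antidiagonal m, ∑ i ∈ range (m + 1),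
                ((i.factorial : ℚ)⁻¹) • (PowerSeries.coeff q.1 (g ^ i) *
                  PowerSeries.coeff q.2 (d⁄dX A g)) := by
          rw [PowerSeries.coeff_mul]
          refine Finset.sum_congr rfl fun q hq => ?_
          rw [coeff_expComp hg (Nat.le.intro (Finset.HasAntidiagonal.mem_antidiagonal.mp hq)),
            Finset.sum_mul]
          exact Finset.sum_congr rfl fun i _ => smul_mul_assoc _ _ _
        rw [hrhs, Finset.sum_comm]
        refine Finset.sum_congr rfl fun i _ => ?_
        rw [PowerSeries.coeff_mul, Finset.smul_sum]

end StmtAux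

theorem stmt11 {A : Type*} [CommRing A] [Algebra ℚ A] (h : PowerSeries ℚ)
    (hh : PowerSeries.constantCoeff h = 0) (c : ℕ → ℚ)
    (hc : ∀ m, c m = (m.factorial : ℚ) * PowerSeries.coeff m h) (hc1 : c 1 = 1)
    (p : ℕ → A → A)
    (hp : ∀ n x, p n x = (n.factorial : A) *
      PowerSeries.coeff n (expComp (PowerSeries.C x * h.map (algebraMap ℚ A))))
    (n : ℕ) (hn : 1 ≤ n) (x : A) :
    p n x = x * ∑ k ∈ Finset.range n,
      ((n - 1).choose k : A) * algebraMap ℚ A (c (k + 1)) * p (n - 1 - k) x := by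
  obtain ⟨m, rfl⟩ : ∃ m, n = m + 1 := ⟨n - 1, by omega⟩
  set g : PowerSeries A := PowerSeries.C x * h.map (algebraMap ℚ A) with hg_def
  have hg : constantCoeff g = 0 := by
    rw [hg_def, map_mul, PowerSeries.constantCoeff_C,
      show constantCoeff (h.map (algebraMap ℚ A)) = algebraMap ℚ A (constantCoeff h) from by
        rw [← PowerSeries.coeff_zero_eq_constantCoeff_apply, PowerSeries.coeff_map,
          PowerSeries.coeff_zero_eq_constantCoeff_apply],
      hh, map_zero, mul_zero]
  have hdg : ∀ k, PowerSeries.coeff k (d⁄dX A g)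
      = x * algebraMap ℚ A (((k : ℚ) + 1) * PowerSeries.coeff (k + 1) h) := by
    intro k
    rw [coeff_derivative, hg_def]
    simp only [PowerSeries.coeff_C_mul, PowerSeries.coeff_map, map_mul]
    rw [show (algebraMap ℚ A) ((k : ℚ) + 1) = ((k : A) + 1) by push_cast [map_natCast]; rfl]
    ring
  have hkey := StmtAux.key hg m
  rw [PowerSeries.coeff_mul, Finset.Nat.sum_antidiagonal_eq_sum_range_succ_mk] at hkey
  simp only [hp, ← hg_def, Nat.add_sub_cancel]
  have hfac : ((m + 1).factorial : A) * PowerSeries.coeff (m + 1) (expComp g)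
      = (m.factorial : A) * (((m + 1 : ℕ) : A) * PowerSeries.coeff (m + 1) (expComp g)) := by
    rw [Nat.factorial_succ]; push_cast; ring
  rw [hfac, hkey, Finset.mul_sum, ← Finset.sum_range_reflect, Finset.mul_sum]
  refine Finset.sum_congr rfl fun k hk => ?_
  simp only [Finset.mem_range] at hk
  have hk' : k ≤ m := by omega
  rw [show m + 1 - 1 - k = m - k from by omega,
    show m - (m - k) = k from by omega, hdg k]
  have hQ : (m.factorial : ℚ) * (((k : ℚ) + 1) * PowerSeries.coeff (k + 1) h)
      = (m.choose k : ℚ) * c (k + 1) * ((m - k).factorial : ℚ) := by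
    rw [hc]
    have hNat : m.factorial * (k + 1) = m.choose k * (k + 1).factorial * (m - k).factorial := by
      rw [Nat.factorial_succ]
      have h2 := Nat.choose_mul_factorial_mul_factorial hk'
      calc m.factorial * (k + 1) = (k + 1) * (m.choose k * k.factorial * (m - k).factorial) := by
            rw [h2]; ring
        _ = m.choose k * ((k + 1) * k.factorial) * (m - k).factorial := by ring
    have := congrArg (fun t : ℕ => (t : ℚ)) hNat
    push_cast at this
    linear_combination (PowerSeries.coeff (k + 1) h) * this
  have hA : (m.factorial : A) * algebraMap ℚ A (((k : ℚ) + 1) * PowerSeries.coeff (k + 1) h)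
      = (m.choose k : A) * algebraMap ℚ A (c (k + 1)) * ((m - k).factorial : A) := by
    have := congrArg (algebraMap ℚ A) hQ
    simpa [map_mul] using this
  linear_combination (PowerSeries.coeff (m - k) (expComp g) * x) * hA
end
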